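/- arXiv:2107.14570 — 2 statements merged into one kernel-verified Lean document; each statement's English description precedes it below -/
import Mathlib

section
/- Let k ≥ 1 and Δ ≥ 2^k be integers. Let μ be the number of successes among at most Δ independent Bernoulli trials, each with success probability at most 2/Δ⁴. Then for every integer t ≥ 1 it holds that Pr[μ ≥ t] ≤ exp(−t) ≤ (1 − Δ^{−1/k})^t. -/
open MeasureTheory ProbabilityTheory

/-- If `μ` counts the successes among at most `Δ` independent Bernoulli trials,
each with success probability at most `2/Δ⁴`, where `Δ ≥ 2^k`, then for every
integer `t ≥ 1` we have `Pr[μ ≥ t] ≤ exp(-t) ≤ (1 - Δ^{-1/k})^t`. -/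
theorem early_count_tail
    {Ω : Type*} [MeasurableSpace Ω] (μ : Measure Ω) [IsProbabilityMeasure μ]
    (k Δ : ℕ) (hk : 1 ≤ k) (hΔ : 2 ^ k ≤ Δ)
    (N : ℕ) (hN : N ≤ Δ)
    (X : Fin N → Ω → ℕ)
    (hmeas : ∀ i, Measurable (X i))
    (h01 : ∀ i ω, X i ω = 0 ∨ X i ω = 1)
    (hp : ∀ i, μ {ω | X i ω = 1} ≤ ENNReal.ofReal (2 / (Δ : ℝ) ^ 4))
    (hindep : iIndepFun X μ)
    (t : ℕ) (ht : 1 ≤ t) :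
    μ {ω | t ≤ ∑ i, X i ω} ≤ ENNReal.ofReal (Real.exp (-(t : ℝ))) ∧
    Real.exp (-(t : ℝ)) ≤ (1 - (Δ : ℝ) ^ (-(1 : ℝ) / k)) ^ t := by
  have hΔ2 : (2 : ℕ) ≤ Δ := by
    calc 2 = 2 ^ 1 := rfl
      _ ≤ 2 ^ k := Nat.pow_le_pow_right (by norm_num) hk
      _ ≤ Δ := hΔ
  have hΔR : (2 : ℝ) ≤ (Δ : ℝ) := by exact_mod_cast hΔ2
  have hΔpos : (0 : ℝ) < (Δ : ℝ) := by linarith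
  constructor
  · -- tail bound
    set A : Fin N → Set Ω := fun i => {ω | X i ω = 1} with hA
    -- union bound over subsets of size t
    set 𝒮 : Finset (Finset (Fin N)) := Finset.powersetCard t Finset.univ with h𝒮
    have hsub : {ω | t ≤ ∑ i, X i ω} ⊆ ⋃ S ∈ 𝒮, ⋂ i ∈ S, A i := by
      intro ω hω
      have hcard : t ≤ (Finset.univ.filter (fun i => X i ω = 1)).card := by
        calc t ≤ ∑ i, X i ω := hω
          _ = ∑ i ∈ Finset.univ.filter (fun i => X i ω = 1), X i ω := by
              refine (Finset.sum_filter_of_ne ?_).symm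
              intro i _ hne
              rcases h01 i ω with h | h
              · exact absurd h (by omega)
              · exact h
          _ = (Finset.univ.filter (fun i => X i ω = 1)).card := by
              rw [Finset.card_eq_sum_ones]
              exact Finset.sum_congr rfl fun i hi => (Finset.mem_filter.mp hi).2
      obtain ⟨S, hS, hScard⟩ := Finset.exists_subset_card_eq hcard
      refine Set.mem_biUnion (show S ∈ 𝒮 by
        simp [h𝒮, Finset.mem_powersetCard, hScard]) ?_
      simp only [Set.mem_iInter]
      intro i hi
      exact (Finset.mem_filter.mp (hS hi)).2
    have hmeasInter : ∀ S ∈ 𝒮, μ (⋂ i ∈ S, A i) = ∏ i ∈ S, μ (A i) := by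
      intro S _
      refine hindep.meas_biInter (fun i _ => ⟨{1}, measurableSet_singleton 1, ?_⟩)
      ext ω; simp [hA]
    have key : μ {ω | t ≤ ∑ i, X i ω} ≤
        ∑ S ∈ 𝒮, ∏ i ∈ S, μ (A i) := by
      calc μ {ω | t ≤ ∑ i, X i ω} ≤ μ (⋃ S ∈ 𝒮, ⋂ i ∈ S, A i) := measure_mono hsub
        _ ≤ ∑ S ∈ 𝒮, μ (⋂ i ∈ S, A i) := measure_biUnion_finset_le 𝒮 _
        _ = ∑ S ∈ 𝒮, ∏ i ∈ S, μ (A i) := Finset.sum_congr rfl hmeasInter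
    set p : ENNReal := ENNReal.ofReal (2 / (Δ : ℝ) ^ 4) with hpdef
    have hprod : ∀ S ∈ 𝒮, (∏ i ∈ S, μ (A i)) ≤ p ^ t := by
      intro S hS
      have hScard : S.card = t := (Finset.mem_powersetCard.mp hS).2
      calc ∏ i ∈ S, μ (A i) ≤ ∏ _i ∈ S, p := Finset.prod_le_prod' fun i _ => hp i
        _ = p ^ t := by rw [Finset.prod_const, hScard]
    have hcount : (𝒮.card : ENNReal) ≤ (N : ENNReal) ^ t := by
      have : 𝒮.card = Nat.choose N t := by
        simp [h𝒮, Finset.card_powersetCard]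
      rw [this]
      exact_mod_cast Nat.choose_le_pow N t
    have key2 : μ {ω | t ≤ ∑ i, X i ω} ≤ (N : ENNReal) ^ t * p ^ t := by
      refine key.trans ?_
      calc ∑ S ∈ 𝒮, ∏ i ∈ S, μ (A i) ≤ ∑ _S ∈ 𝒮, p ^ t := Finset.sum_le_sum hprod
        _ = (𝒮.card : ENNReal) * p ^ t := by rw [Finset.sum_const, nsmul_eq_mul]
        _ ≤ (N : ENNReal) ^ t * p ^ t := by gcongr
    refine key2.trans ?_
    have hNp : (N : ENNReal) ^ t * p ^ t = ENNReal.ofReal (((N:ℝ) * (2 / (Δ:ℝ)^4)) ^ t) := by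
      rw [mul_pow, ENNReal.ofReal_mul (by positivity),
        ENNReal.ofReal_pow (by positivity), ENNReal.ofReal_pow (by positivity),
        ENNReal.ofReal_natCast]
    rw [hNp]
    apply ENNReal.ofReal_le_ofReal
    have hbase : (N : ℝ) * (2 / (Δ:ℝ)^4) ≤ Real.exp (-1) := by
      have h1 : (N : ℝ) * (2 / (Δ:ℝ)^4) ≤ 2 / (Δ:ℝ)^3 := by
        have hNR : (N : ℝ) ≤ (Δ : ℝ) := by exact_mod_cast hN
        have heq : (Δ:ℝ) * (2 / (Δ:ℝ)^4) = 2 / (Δ:ℝ)^3 := by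
          field_simp
        calc (N : ℝ) * (2 / (Δ:ℝ)^4) ≤ (Δ:ℝ) * (2 / (Δ:ℝ)^4) :=
              mul_le_mul_of_nonneg_right hNR (by positivity)
          _ = 2 / (Δ:ℝ)^3 := heq
      have h2 : 2 / (Δ:ℝ)^3 ≤ 2 / 8 := by
        apply div_le_div_of_nonneg_left (by norm_num) (by norm_num)
        calc (8:ℝ) = 2^3 := by norm_num
          _ ≤ (Δ:ℝ)^3 := by gcongr
      have h3 : (2:ℝ)/8 ≤ Real.exp (-1) := by
        rw [Real.exp_neg]
        rw [inv_eq_one_div, div_le_div_iff₀ (by norm_num) (Real.exp_pos 1)]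
        nlinarith [Real.exp_one_lt_d9, Real.exp_one_gt_d9]
      linarith
    calc ((N : ℝ) * (2 / (Δ:ℝ)^4)) ^ t ≤ (Real.exp (-1)) ^ t := by
          apply pow_le_pow_left₀ (by positivity) hbase
      _ = Real.exp (-(t:ℝ)) := by
          rw [← Real.exp_nat_mul]; ring_nf
  · -- second inequality
    have hroot : (Δ : ℝ) ^ (-(1:ℝ)/k) ≤ 1/2 := by
      have hkpos : (0:ℝ) < (k:ℝ) := by exact_mod_cast hk
      have h2k : (2:ℝ)^(k:ℕ) ≤ (Δ:ℝ) := by exact_mod_cast hΔ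
      have hΔpow : (2:ℝ) ≤ (Δ:ℝ) ^ ((1:ℝ)/k) := by
        have := Real.rpow_le_rpow (by positivity) h2k (le_of_lt (by positivity : (0:ℝ) < 1/(k:ℝ)))
        rwa [← Real.rpow_natCast (2:ℝ) k, ← Real.rpow_mul (by norm_num),
          mul_one_div, div_self (ne_of_gt hkpos), Real.rpow_one] at this
      have : (Δ:ℝ) ^ (-(1:ℝ)/k) = ((Δ:ℝ) ^ ((1:ℝ)/k))⁻¹ := by
        rw [neg_div, Real.rpow_neg (le_of_lt hΔpos)]
      rw [this]
      rw [inv_le_comm₀ (by linarith) (by norm_num)]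
      linarith [hΔpow]
    have hbound : Real.exp (-1) ≤ 1 - (Δ : ℝ) ^ (-(1:ℝ)/k) := by
      have : Real.exp (-1) ≤ 1/2 := by
        rw [Real.exp_neg, inv_le_comm₀ (Real.exp_pos 1) (by norm_num)]
        nlinarith [Real.exp_one_gt_d9]
      linarith
    calc Real.exp (-(t:ℝ)) = (Real.exp (-1)) ^ t := by
          rw [← Real.exp_nat_mul]; ring_nf
      _ ≤ (1 - (Δ : ℝ) ^ (-(1:ℝ)/k)) ^ t := by
          apply pow_le_pow_left₀ (le_of_lt (Real.exp_pos _)) hbound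
end

section
/- Let k ≥ 3 and Δ ≥ 2 be integers, let D ≥ 1 be a real number with 4k/D ≤ 1, and let M be an integer with M ≤ D/(4·Δ^{1/k}). Let X be binomially distributed with parameters M and 4k/D. Then Pr[X ≥ 3k] ≤ 1/Δ². -/
open MeasureTheory ProbabilityTheory

open scoped Nat

lemma pow_self_le_exp_mul_factorial : ∀ n : ℕ, (n : ℝ) ^ n ≤ Real.exp n * n ! := by
  intro n
  induction n with
  | zero => simp
  | succ n ih =>
    have hstep : ((n : ℝ) + 1) ^ n ≤ Real.exp 1 * (n : ℝ) ^ n := by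
      rcases Nat.eq_zero_or_pos n with h | h
      · simp [h, Real.one_le_exp]
      · have hn : (0 : ℝ) < n := by exact_mod_cast h
        have h1 : (n : ℝ) + 1 ≤ (n : ℝ) * Real.exp (1 / n) := by
          have := Real.add_one_le_exp (1 / (n : ℝ))
          calc (n : ℝ) + 1 = (n : ℝ) * (1 / n + 1) := by field_simp; ring
            _ ≤ (n : ℝ) * Real.exp (1 / n) := by
                exact mul_le_mul_of_nonneg_left this hn.le
        calc ((n : ℝ) + 1) ^ n ≤ ((n : ℝ) * Real.exp (1 / n)) ^ n := by
              apply pow_le_pow_left₀ (by positivity) h1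
          _ = (n : ℝ) ^ n * Real.exp (1 / n) ^ n := by rw [mul_pow]
          _ = (n : ℝ) ^ n * Real.exp 1 := by
              rw [← Real.exp_nat_mul]
              congr 1
              field_simp
          _ = Real.exp 1 * (n : ℝ) ^ n := by ring
    have hnn : (0 : ℝ) ≤ (n : ℝ) + 1 := by positivity
    calc ((n + 1 : ℕ) : ℝ) ^ (n + 1) = ((n : ℝ) + 1) * ((n : ℝ) + 1) ^ n := by
          push_cast; ring
      _ ≤ ((n : ℝ) + 1) * (Real.exp 1 * (n : ℝ) ^ n) :=
          mul_le_mul_of_nonneg_left hstep hnn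
      _ ≤ ((n : ℝ) + 1) * (Real.exp 1 * (Real.exp n * n !)) := by
          apply mul_le_mul_of_nonneg_left _ hnn
          exact mul_le_mul_of_nonneg_left ih (Real.exp_pos 1).le
      _ = Real.exp ((n : ℝ) + 1) * (((n : ℝ) + 1) * n !) := by
          rw [Real.exp_add]; ring
      _ = Real.exp ((n + 1 : ℕ) : ℝ) * ((n + 1)! : ℝ) := by
          push_cast [Nat.factorial_succ]; ring

lemma pow_le_factorial_three_mul (k : ℕ) : ((k : ℝ)) ^ (3 * k) ≤ ((3 * k)! : ℝ) := by
  have h := pow_self_le_exp_mul_factorial (3 * k)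
  have he : Real.exp ((3 * k : ℕ) : ℝ) ≤ (3 : ℝ) ^ (3 * k) := by
    rw [show ((3 * k : ℕ) : ℝ) = (3 * k : ℕ) * 1 by simp, Real.exp_nat_mul]
    apply pow_le_pow_left₀ (Real.exp_pos 1).le
    exact (Real.exp_one_lt_d9.le.trans (by norm_num))
  have h3 : ((3 * k : ℕ) : ℝ) ^ (3 * k) = (3 : ℝ) ^ (3 * k) * (k : ℝ) ^ (3 * k) := by
    push_cast; rw [mul_pow]
  have hpos : (0 : ℝ) < (3 : ℝ) ^ (3 * k) := by positivity
  have hf : (0 : ℝ) < ((3 * k)! : ℝ) := by exact_mod_cast Nat.factorial_pos (3 * k)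
  have h2 : (3 : ℝ) ^ (3 * k) * (k : ℝ) ^ (3 * k) ≤ (3 : ℝ) ^ (3 * k) * ((3 * k)! : ℝ) := by
    calc (3 : ℝ) ^ (3 * k) * (k : ℝ) ^ (3 * k) = ((3 * k : ℕ) : ℝ) ^ (3 * k) := h3.symm
      _ ≤ Real.exp ((3 * k : ℕ) : ℝ) * ((3 * k)! : ℝ) := h
      _ ≤ (3 : ℝ) ^ (3 * k) * ((3 * k)! : ℝ) := mul_le_mul_of_nonneg_right he hf.le
  exact le_of_mul_le_mul_left h2 hpos

lemma real_tail_bound (k Δ : ℕ) (hk : 3 ≤ k) (hΔ : 2 ≤ Δ)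
    (D : ℝ) (hD : 1 ≤ D) (M : ℕ)
    (hM : (M : ℝ) ≤ D / (4 * (Δ : ℝ) ^ ((1 : ℝ) / k))) :
    (M.choose (3 * k) : ℝ) * ((4 * k : ℝ) / D) ^ (3 * k) ≤ 1 / (Δ : ℝ) ^ 2 := by
  have hD0 : (0 : ℝ) < D := lt_of_lt_of_le one_pos hD
  have hΔ1 : (1 : ℝ) ≤ (Δ : ℝ) := by exact_mod_cast (le_trans one_le_two hΔ)
  have hΔ0 : (0 : ℝ) < (Δ : ℝ) := lt_of_lt_of_le one_pos hΔ1
  set r : ℝ := (Δ : ℝ) ^ ((1 : ℝ) / k) with hr_def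
  have hr0 : (0 : ℝ) < r := Real.rpow_pos_of_pos hΔ0 _
  set p : ℝ := (4 * k : ℝ) / D with hp_def
  have hp0 : (0 : ℝ) ≤ p := by positivity
  have hk0 : (k : ℝ) ≠ 0 := by
    have : 0 < k := lt_of_lt_of_le (by norm_num) hk
    exact_mod_cast this.ne'
  have hr3 : r ^ (3 * k) = (Δ : ℝ) ^ (3 : ℕ) := by
    rw [hr_def, ← Real.rpow_natCast ((Δ : ℝ) ^ ((1 : ℝ) / k)) (3 * k),
      ← Real.rpow_mul hΔ0.le, ← Real.rpow_natCast (Δ : ℝ) 3]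
    congr 1
    push_cast
    field_simp
  have hMp : (M : ℝ) * p ≤ (k : ℝ) / r := by
    have h := mul_le_mul_of_nonneg_right hM hp0
    calc (M : ℝ) * p ≤ D / (4 * r) * p := h
      _ = (k : ℝ) / r := by rw [hp_def]; field_simp
  have hMp0 : (0 : ℝ) ≤ (M : ℝ) * p := by positivity
  set F : ℝ := ((3 * k)! : ℝ) with hF_def
  have hF0 : (0 : ℝ) < F := by rw [hF_def]; exact_mod_cast Nat.factorial_pos (3 * k)
  have h5 : (k : ℝ) ^ (3 * k) ≤ F := pow_le_factorial_three_mul k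
  calc (M.choose (3 * k) : ℝ) * p ^ (3 * k)
      ≤ ((M : ℝ) ^ (3 * k) / F) * p ^ (3 * k) := by
        apply mul_le_mul_of_nonneg_right _ (pow_nonneg hp0 _)
        exact_mod_cast Nat.choose_le_pow_div (3 * k) M
    _ = ((M : ℝ) * p) ^ (3 * k) / F := by rw [mul_pow]; ring
    _ ≤ ((k : ℝ) / r) ^ (3 * k) / F := by
        have := pow_le_pow_left₀ hMp0 hMp (3 * k)
        gcongr
    _ = (k : ℝ) ^ (3 * k) / ((Δ : ℝ) ^ (3 : ℕ) * F) := by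
        rw [div_pow, hr3]
        rw [div_div]
    _ ≤ F / ((Δ : ℝ) ^ (3 : ℕ) * F) := by gcongr
    _ = 1 / (Δ : ℝ) ^ (3 : ℕ) := by field_simp
    _ ≤ 1 / (Δ : ℝ) ^ 2 := by
        apply one_div_le_one_div_of_le (by positivity)
        exact pow_le_pow_right₀ hΔ1 (by norm_num)


/-- A low-span set rarely receives many Beeps: if `X` is binomially distributed with
parameters `M` and `4k/D`, where `k ≥ 3`, `Δ ≥ 2`, `4k/D ≤ 1` and
`M ≤ D/(4·Δ^{1/k})`, then `Pr[X ≥ 3k] ≤ 1/Δ²`. -/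
theorem low_span_beep_bound
    {Ω : Type*} [MeasurableSpace Ω] (μ : Measure Ω) [IsProbabilityMeasure μ]
    (k Δ : ℕ) (hk : 3 ≤ k) (hΔ : 2 ≤ Δ)
    (D : ℝ) (hD : 1 ≤ D) (hkD : (4 * k : ℝ) / D ≤ 1)
    (M : ℕ) (hM : (M : ℝ) ≤ D / (4 * (Δ : ℝ) ^ ((1 : ℝ) / k)))
    (X : Fin M → Ω → ℕ)
    (hmeas : ∀ i, Measurable (X i))
    (h01 : ∀ i ω, X i ω = 0 ∨ X i ω = 1)
    (hp : ∀ i, μ {ω | X i ω = 1} = ENNReal.ofReal ((4 * k : ℝ) / D))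
    (hindep : iIndepFun X μ) :
    μ {ω | 3 * k ≤ ∑ i, X i ω} ≤ ENNReal.ofReal (1 / (Δ : ℝ) ^ 2) := by
    classical
  have hD0 : (0 : ℝ) < D := lt_of_lt_of_le one_pos hD
  have hA : ∀ i : Fin M,
      MeasurableSet[(inferInstance : MeasurableSpace ℕ).comap (X i)] (X i ⁻¹' {1}) :=
    fun i => ⟨{1}, measurableSet_singleton 1, rfl⟩
  have hsub : {ω | 3 * k ≤ ∑ i, X i ω} ⊆
      ⋃ S ∈ Finset.powersetCard (3 * k) (Finset.univ : Finset (Fin M)),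
        ⋂ i ∈ S, X i ⁻¹' {1} := by
    intro ω hω
    simp only [Set.mem_setOf_eq] at hω
    set T : Finset (Fin M) := Finset.univ.filter (fun i => X i ω = 1) with hT
    have hsum : ∑ i, X i ω = T.card := by
      rw [Finset.card_eq_sum_ones, hT, Finset.sum_filter]
      apply Finset.sum_congr rfl
      intro i _
      rcases h01 i ω with h | h <;> simp [h]
    have hcard : 3 * k ≤ T.card := hsum ▸ hω
    obtain ⟨S, hST, hScard⟩ := Finset.exists_subset_card_eq hcard
    refine Set.mem_biUnion (Finset.mem_powersetCard.mpr ⟨Finset.subset_univ S, hScard⟩) ?_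
    refine Set.mem_iInter₂.mpr fun i hi => ?_
    have hiT : i ∈ T := hST hi
    rw [hT, Finset.mem_filter] at hiT
    simpa using hiT.2
  calc μ {ω | 3 * k ≤ ∑ i, X i ω}
      ≤ μ (⋃ S ∈ Finset.powersetCard (3 * k) (Finset.univ : Finset (Fin M)),
          ⋂ i ∈ S, X i ⁻¹' {1}) := measure_mono hsub
    _ ≤ ∑ S ∈ Finset.powersetCard (3 * k) (Finset.univ : Finset (Fin M)),
          μ (⋂ i ∈ S, X i ⁻¹' {1}) := measure_biUnion_finset_le _ _
    _ = ∑ S ∈ Finset.powersetCard (3 * k) (Finset.univ : Finset (Fin M)),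
          ENNReal.ofReal ((4 * k : ℝ) / D) ^ (3 * k) := by
        apply Finset.sum_congr rfl
        intro S hS
        rw [hindep.meas_biInter (fun i _ => hA i)]
        have hEq : ∀ i ∈ S, μ (X i ⁻¹' {1}) = ENNReal.ofReal ((4 * k : ℝ) / D) := by
          intro i _
          have h := hp i
          have : X i ⁻¹' {1} = {ω | X i ω = 1} := by ext ω; simp
          rw [this, h]
        rw [Finset.prod_congr rfl hEq, Finset.prod_const,
          (Finset.mem_powersetCard.mp hS).2]
    _ = (M.choose (3 * k) : ENNReal) * ENNReal.ofReal ((4 * k : ℝ) / D) ^ (3 * k) := by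
        rw [Finset.sum_const, Finset.card_powersetCard, Finset.card_univ, Fintype.card_fin,
          nsmul_eq_mul]
    _ ≤ ENNReal.ofReal (1 / (Δ : ℝ) ^ 2) := by
        have hp0 : (0 : ℝ) ≤ (4 * k : ℝ) / D := div_nonneg (by positivity) hD0.le
        rw [← ENNReal.ofReal_pow hp0, ← ENNReal.ofReal_natCast,
          ← ENNReal.ofReal_mul (by positivity)]
        exact ENNReal.ofReal_le_ofReal (real_tail_bound k Δ hk hΔ D hD M hM)
end
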